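/- Let λ ≠ 0 be real, p ≠ 0 real, n ≥ 1, h > 0 with |ph| < π, z = ph. Define ω̄ = -iλp, ω_n = -i ∑_{j=0}^{n} (2^j λ/(3^j h)) sin z · sin^{2j}(z/2), and ω_G = (-iλ sin(z)/h)/(1 - (2/3)sin²(z/2)). Then |ω_G - ω̄| < |ω_n - ω̄|. -/

import Mathlib

open Finset

private lemma key_lemma (z : ℝ) (h1 : 0 < z) (h2 : z < Real.pi) :
    Real.sin z < z * (1 - 2/3 * Real.sin (z/2)^2) := by
  set g : ℝ → ℝ := fun x => x * (1 - 2/3 * Real.sin (x/2)^2) - Real.sin x with hg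
  have hderiv : ∀ x : ℝ, HasDerivAt g
      ((1 - 2/3 * Real.sin (x/2)^2) + x * (-(2/3) * (2 * Real.sin (x/2)^1 * (Real.cos (x/2) * (1/2)))) - Real.cos x) x := by
    intro x
    have hs : HasDerivAt (fun x : ℝ => Real.sin (x/2)) (Real.cos (x/2) * (1/2)) x := by
      have := (Real.hasDerivAt_sin (x/2)).comp x ((hasDerivAt_id x).div_const 2)
      simpa [Function.comp_def] using this
    have hs2 : HasDerivAt (fun x : ℝ => Real.sin (x/2)^2)
        (2 * Real.sin (x/2)^1 * (Real.cos (x/2) * (1/2))) x := hs.pow 2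
    have h3 : HasDerivAt (fun x : ℝ => 1 - 2/3 * Real.sin (x/2)^2)
        (-(2/3) * (2 * Real.sin (x/2)^1 * (Real.cos (x/2) * (1/2)))) x := by
      simpa using ((hs2.const_mul (2/3 : ℝ)).const_sub 1)
    have h4 := (hasDerivAt_id' x).mul h3
    exact (h4.sub (Real.hasDerivAt_sin x)).congr_deriv (by ring)
  have hpos : ∀ x ∈ Set.Ioo (0:ℝ) Real.pi, 0 < deriv g x := by
    intro x hx
    rw [(hderiv x).deriv]
    have hcos : Real.cos x = 1 - 2 * Real.sin (x/2)^2 := by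
      have := Real.cos_two_mul (x/2)
      have hpyth := Real.sin_sq_add_cos_sq (x/2)
      have hx2 : 2 * (x/2) = x := by ring
      rw [hx2] at this
      linarith
    have hs_pos : 0 < Real.sin (x/2) :=
      Real.sin_pos_of_pos_of_lt_pi (by linarith [hx.1]) (by linarith [hx.2, Real.pi_pos])
    have hc_pos : 0 < Real.cos (x/2) :=
      Real.cos_pos_of_mem_Ioo ⟨by linarith [hx.1, Real.pi_pos], by linarith [hx.2]⟩
    have htan : x/2 < Real.tan (x/2) := Real.lt_tan (by linarith [hx.1]) (by linarith [hx.2])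
    rw [Real.tan_eq_sin_div_cos] at htan
    have h2s : x/2 * Real.cos (x/2) < Real.sin (x/2) := (lt_div_iff₀ hc_pos).mp htan
    have key2 : 0 < Real.sin (x/2) * (2 * Real.sin (x/2) - x * Real.cos (x/2)) :=
      mul_pos hs_pos (by linarith)
    rw [hcos]
    simp only [pow_one]
    nlinarith [key2]
  have hcont : ContinuousOn g (Set.Icc 0 Real.pi) := by fun_prop
  have hmono : StrictMonoOn g (Set.Icc 0 Real.pi) := by
    apply strictMonoOn_of_deriv_pos (convex_Icc 0 Real.pi) hcont
    rwa [interior_Icc]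
  have h0 : g 0 = 0 := by simp [hg]
  have := hmono (Set.mem_Icc.mpr ⟨le_refl 0, Real.pi_pos.le⟩)
    (Set.mem_Icc.mpr ⟨h1.le, h2.le⟩) h1
  rw [h0] at this
  simp only [hg] at this
  linarith

/-- Fourier symbol of the `m`-th corrected mass-lumped scheme for pure transport. -/
noncomputable def omegaTransport (lam p h : ℝ) (m : ℕ) : ℂ :=
  -Complex.I * ((∑ j ∈ range (m+1),
      (2:ℝ)^j * lam / (3^j * h) * Real.sin (p*h) * Real.sin (p*h/2) ^ (2*j) : ℝ) : ℂ)

/-- Fourier symbol of the consistent Galerkin scheme for pure transport. -/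
noncomputable def omegaGalTransport (lam p h : ℝ) : ℂ :=
  -Complex.I * ((lam * Real.sin (p*h) / h / (1 - (2/3) * Real.sin (p*h/2)^2) : ℝ) : ℂ)

theorem stmt_9 (lam p h : ℝ) (n : ℕ) (hlam : lam ≠ 0) (hp : p ≠ 0) (hn : 1 ≤ n)
    (hh : 0 < h) (hz : |p*h| < Real.pi) :
    ‖omegaGalTransport lam p h - (-Complex.I * ((lam * p : ℝ) : ℂ))‖
      < ‖omegaTransport lam p h n - (-Complex.I * ((lam * p : ℝ) : ℂ))‖ := by
  have hpi := Real.pi_pos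
  have hzpi := abs_lt.mp hz
  have hz0 : p * h ≠ 0 := mul_ne_zero hp hh.ne'
  set z : ℝ := p * h with hzdef
  set s : ℝ := Real.sin (z/2) with hsdef
  set t : ℝ := (2/3 : ℝ) * s^2 with htdef
  have hs0 : s ≠ 0 := by
    rw [hsdef, Ne, Real.sin_eq_zero_iff_of_lt_of_lt (by linarith [hzpi.1]) (by linarith [hzpi.2])]
    intro hc
    exact hz0 (by linarith)
  have hs2 : 0 < s^2 := by positivity
  have ht0 : 0 < t := by rw [htdef]; positivity
  have hsle : s^2 ≤ 1 := by
    rw [hsdef, ← Real.sin_sq_add_cos_sq (z/2)]; nlinarith [sq_nonneg (Real.cos (z/2))]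
  have ht1 : t < 1 := by rw [htdef]; nlinarith
  have h1t : 0 < 1 - t := by linarith
  -- core sign fact
  have hkey : (Real.sin z - z * (1 - t)) * Real.sin z < 0 := by
    rcases lt_or_gt_of_ne hz0 with hneg | hpos
    · have hk := key_lemma (-z) (by linarith) (by linarith [hzpi.1])
      have hns : Real.sin (-z/2) ^ 2 = s^2 := by
        rw [hsdef, neg_div, Real.sin_neg, neg_sq]
      rw [Real.sin_neg, hns] at hk
      have hsin : Real.sin z < 0 := by
        have h' : 0 < Real.sin (-z) :=
          Real.sin_pos_of_pos_of_lt_pi (by linarith) (by linarith [hzpi.1])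
        rw [Real.sin_neg] at h'; linarith
      have : 0 < Real.sin z - z * (1 - t) := by rw [htdef]; nlinarith
      exact mul_neg_of_pos_of_neg this hsin
    · have hk := key_lemma z hpos hzpi.2
      have hsin : 0 < Real.sin z := Real.sin_pos_of_pos_of_lt_pi hpos hzpi.2
      have : Real.sin z - z * (1 - t) < 0 := by rw [htdef]; nlinarith
      exact mul_neg_of_neg_of_pos this hsin
  set c : ℝ := lam * Real.sin z / h with hcdef
  set y : ℝ := lam * p with hydef
  set A : ℝ := c - y * (1 - t) with hAdef
  set d : ℝ := c * t^(n+1) with hddef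
  have hpz : p = z / h := by field_simp [hzdef]; exact hzdef.symm
  have hAd : A * d < 0 := by
    have hA_eq : A = (lam / h) * (Real.sin z - z * (1 - t)) := by
      rw [hAdef, hcdef, hydef, hpz]; field_simp
    have hd_eq : d = (lam / h) * Real.sin z * t^(n+1) := by
      rw [hddef, hcdef]; ring
    have hprod : A * d = (lam/h)^2 * t^(n+1) * ((Real.sin z - z * (1 - t)) * Real.sin z) := by
      rw [hA_eq, hd_eq]; ring
    rw [hprod]
    have hsq : 0 < (lam/h)^2 := by positivity
    have htp : 0 < t^(n+1) := pow_pos ht0 _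
    exact mul_neg_of_pos_of_neg (mul_pos hsq htp) hkey
  have habs : |A| < |A - d| := by
    have hsq : A^2 < (A - d)^2 := by nlinarith [sq_nonneg d]
    rw [← Real.sqrt_sq_eq_abs, ← Real.sqrt_sq_eq_abs]
    exact Real.sqrt_lt_sqrt (sq_nonneg _) hsq
  -- rewrite both symbols
  have hGr : lam * Real.sin z / h / (1 - (2/3) * s^2) - y = A / (1 - t) := by
    have e1 : (1:ℝ) - (2/3) * s^2 = 1 - t := by rw [htdef]
    rw [e1, ← hcdef, eq_div_iff h1t.ne', sub_mul, div_mul_cancel₀ _ h1t.ne', hAdef]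
  have hsum : (∑ j ∈ range (n+1),
      (2:ℝ)^j * lam / (3^j * h) * Real.sin z * s ^ (2*j)) = c * ∑ j ∈ range (n+1), t^j := by
    rw [Finset.mul_sum]
    apply Finset.sum_congr rfl
    intro j _
    rw [hcdef, htdef, mul_pow, pow_mul]
    field_simp
    rw [div_pow, mul_div_assoc', mul_assoc, mul_div_cancel_left₀ _ (by positivity : (3:ℝ)^j ≠ 0)]; ring
  have hSr : (∑ j ∈ range (n+1),
      (2:ℝ)^j * lam / (3^j * h) * Real.sin z * s ^ (2*j)) - y = (A - d) / (1 - t) := by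
    rw [hsum, geom_sum_eq ht1.ne, eq_div_iff h1t.ne', hAdef, hddef]
    have ht1' : t - 1 ≠ 0 := by intro hc; rw [sub_eq_zero] at hc; exact ht1.ne hc
    field_simp
    ring
  have hcabs : ∀ x : ℝ, ‖-Complex.I * (x : ℂ) - (-Complex.I * ((y:ℝ) : ℂ))‖ = |x - y| := by
    intro x
    have hx : -Complex.I * (x : ℂ) - (-Complex.I * ((y:ℝ) : ℂ)) = -Complex.I * (((x - y : ℝ)) : ℂ) := by
      push_cast; ring
    rw [hx, norm_mul, Complex.norm_real]
    simp
  rw [omegaGalTransport, omegaTransport, hcabs, hcabs, hGr, hSr]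
  rw [abs_div, abs_div, abs_of_pos h1t]
  gcongr
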